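/- For pairwise distinct real numbers κ₁,…,κₙ with κᵢ + κⱼ ≠ 0 for all i,j, and real x, the n×n determinant det(sinh((κᵢ+κⱼ)x)/(κᵢ+κⱼ)) equals W(cosh(κ₁x),…,cosh(κₙx)) · W(sinh(κ₁x),…,sinh(κₙx)) divided by (∏ᵢ κᵢ) · ∏_{i<j}(κᵢ+κⱼ)². -/

import Mathlib

open Matrix

namespace SGW

/-- Interleaved Vandermonde-type matrix: `a j` on even rows, `b j` on odd rows. -/
noncomputable def Vm {n : ℕ} (a b κ : Fin n → ℝ) : Matrix (Fin n) (Fin n) ℝ :=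
  Matrix.of fun i j => κ j ^ (i : ℕ) * (if Even (i : ℕ) then a j else b j)

/-- Cauchy-like symmetric matrix with generators `a`, `b`. -/
noncomputable def Gm {n : ℕ} (a b κ : Fin n → ℝ) : Matrix (Fin n) (Fin n) ℝ :=
  Matrix.of fun i j => (a i * b j + a j * b i) / (κ i + κ j)

noncomputable def Dl {n : ℕ} (κ : Fin n → ℝ) : ℝ :=
  (∏ i, κ i) * ∏ i, ∏ j ∈ Finset.Ioi i, (κ i + κ j) ^ 2

lemma dl_ne_zero {n : ℕ} (κ : Fin n → ℝ) (hsum : ∀ i j, κ i + κ j ≠ 0) : Dl κ ≠ 0 := by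
  have hκ : ∀ i, κ i ≠ 0 := by
    intro i h
    exact hsum i i (by rw [h, add_zero])
  apply mul_ne_zero
  · exact Finset.prod_ne_zero_iff.mpr fun i _ => hκ i
  · exact Finset.prod_ne_zero_iff.mpr fun i _ =>
      Finset.prod_ne_zero_iff.mpr fun j _ => pow_ne_zero _ (hsum i j)

/-- Schur complement determinant formula with pivot at `(0,0)`. -/
lemma schur_det {n : ℕ} (M : Matrix (Fin (n+1)) (Fin (n+1)) ℝ) (h : M 0 0 ≠ 0) :
    M.det = M 0 0 * (Matrix.of fun i j : Fin n =>
      M i.succ j.succ - M i.succ 0 * M 0 j.succ / M 0 0).det := by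
  classical
  set E : Matrix (Fin (n+1)) (Fin (n+1)) ℝ :=
    Matrix.of fun i j => if i = 0 ∧ j ≠ 0 then M 0 j / M 0 0 else 0 with hE
  set N : Matrix (Fin (n+1)) (Fin (n+1)) ℝ :=
    Matrix.of fun i j => if j = 0 then M i 0 else if i = 0 then 0
      else M i j - M i 0 * M 0 j / M 0 0 with hN
  have hNE : ∀ i j, (N * E) i j = N i 0 * E 0 j := by
    intro i j
    rw [Matrix.mul_apply]
    refine Finset.sum_eq_single 0 (fun k _ hk => ?_) (by simp)
    simp [hE, hk]
  have hN0 : ∀ i, N i 0 = M i 0 := by intro i; simp [hN]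
  have hN1 : ∀ j, j ≠ 0 → N 0 j = 0 := by intro j hj; simp [hN, hj]
  have hN2 : ∀ i j, i ≠ 0 → j ≠ 0 → N i j = M i j - M i 0 * M 0 j / M 0 0 := by
    intro i j hi hj; simp [hN, hi, hj]
  have hE00 : E 0 0 = 0 := by simp [hE]
  have hE1 : ∀ j, j ≠ 0 → E 0 j = M 0 j / M 0 0 := by intro j hj; simp [hE, hj]
  have hM : M = N * (1 + E) := by
    ext i j
    rw [Matrix.mul_add, Matrix.mul_one, Matrix.add_apply, hNE]
    rcases eq_or_ne j 0 with rfl | hj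
    · rw [hN0 i, hE00]; ring
    · rcases eq_or_ne i 0 with rfl | hi
      · rw [hN1 j hj, hN0 0, hE1 j hj]
        field_simp
        ring
      · rw [hN2 i j hi hj, hN0 i, hE1 j hj]
        ring
  have hdet1E : (1 + E).det = 1 := by
    have ht : (1 + E).BlockTriangular id := by
      intro i j hij
      have hij' : j < i := hij
      have hi0 : i ≠ 0 := by
        intro h
        rw [h] at hij'
        exact absurd hij' (Fin.not_lt_zero j)
      have hne : ¬ i = j := ne_of_gt hij'
      simp [Matrix.add_apply, Matrix.one_apply, hne, hE, hi0]
    rw [Matrix.det_of_upperTriangular ht]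
    refine Finset.prod_eq_one fun i _ => ?_
    simp [Matrix.add_apply, Matrix.one_apply, hE]
  have hdetN : N.det = M 0 0 * (Matrix.of fun i j : Fin n =>
      M i.succ j.succ - M i.succ 0 * M 0 j.succ / M 0 0).det := by
    rw [Matrix.det_succ_row_zero]
    rw [Finset.sum_eq_single 0 (fun j _ hj => by simp [hN, hj]) (by simp)]
    have h00 : N 0 0 = M 0 0 := by simp [hN]
    have hsub : N.submatrix Fin.succ ((0 : Fin (n+1)).succAbove)
        = Matrix.of fun i j : Fin n =>
            M i.succ j.succ - M i.succ 0 * M 0 j.succ / M 0 0 := by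
      ext i j
      simp [hN, Fin.succAbove_zero, Fin.succ_ne_zero]
    rw [h00, hsub]
    simp
  conv_lhs => rw [hM]
  rw [Matrix.det_mul, hdet1E, mul_one, hdetN]

/-- Key bidiagonal factorization lemma. -/
lemma claim1 {n : ℕ} (κ a b : Fin (n+1) → ℝ) (ahat bhat κ' : Fin n → ℝ)
    (hahat : ∀ j, ahat j = b 0 * κ j.succ * a j.succ - a 0 * κ 0 * b j.succ)
    (hbhat : ∀ j, bhat j = a 0 * κ j.succ * b j.succ - b 0 * κ 0 * a j.succ)
    (hκ' : ∀ j, κ' j = κ j.succ) :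
    b 0 * (Vm ahat bhat κ').det
      = (∏ r : Fin n, if Even (r : ℕ) then b 0 else a 0) * (Vm b a κ).det := by
  classical
  set T : Matrix (Fin (n+1)) (Fin (n+1)) ℝ :=
    Matrix.of fun i j =>
      if (i : ℕ) = (j : ℕ) then
        (if (i : ℕ) = 0 then 1 else if Even (i : ℕ) then a 0 else b 0)
      else if (j : ℕ) + 1 = (i : ℕ) then -(κ 0) * (if Even (i : ℕ) then b 0 else a 0)
      else 0 with hT
  set W : Matrix (Fin (n+1)) (Fin (n+1)) ℝ :=
    Matrix.of fun i j =>
      if (i : ℕ) = 0 then b j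
      else κ j ^ ((i : ℕ) - 1) *
        (if Even ((i : ℕ) - 1) then b 0 * κ j * a j - a 0 * κ 0 * b j
         else a 0 * κ j * b j - b 0 * κ 0 * a j) with hW
  -- T is lower triangular with explicit diagonal
  have hTtri : T.BlockTriangular OrderDual.toDual := by
    intro i j hij
    have hv : (i : ℕ) < (j : ℕ) := hij
    have h1 : ¬ ((i : ℕ) = (j : ℕ)) := by omega
    have h2 : ¬ ((j : ℕ) + 1 = (i : ℕ)) := by omega
    simp [hT, h1, h2]
  have hdetT : T.det = ∏ r : Fin n, (if Even (r : ℕ) then b 0 else a 0) := by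
    rw [Matrix.det_of_lowerTriangular T hTtri, Fin.prod_univ_succ]
    have h0 : T 0 0 = 1 := by simp [hT]
    rw [h0, one_mul]
    refine Finset.prod_congr rfl fun r _ => ?_
    have hv : ((r.succ : Fin (n+1)) : ℕ) = (r : ℕ) + 1 := rfl
    have hne : ¬ ((r : ℕ) + 1 = 0) := by omega
    simp only [hT, Matrix.of_apply, hv, if_pos rfl, if_neg hne, Nat.even_add_one]
    by_cases h : Even (r : ℕ) <;> simp [h]
  -- T * Vm b a κ = W
  have hprod : T * Vm b a κ = W := by
    ext i j
    rw [Matrix.mul_apply]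
    refine Fin.cases ?_ (fun r => ?_) i
    · rw [Finset.sum_eq_single 0 (fun k _ hk => ?_) (by simp)]
      · simp [hT, hW, Vm]
      · have hk' : ¬ ((0 : Fin (n+1)) : ℕ) = (k : ℕ) := by
          simpa using fun h => hk (Fin.ext h.symm)
        have hk2 : ¬ ((k : ℕ) + 1 = ((0 : Fin (n+1)) : ℕ)) := by simp
        simp only [hT, Matrix.of_apply, if_neg hk', if_neg hk2, zero_mul]
    · have hsub : ({r.castSucc, r.succ} : Finset (Fin (n+1))) ⊆ Finset.univ := by
        simp
      have hz : ∀ k ∈ (Finset.univ : Finset (Fin (n+1))),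
          k ∉ ({r.castSucc, r.succ} : Finset (Fin (n+1))) →
          T r.succ k * Vm b a κ k j = 0 := by
        intro k _ hk
        simp only [Finset.mem_insert, Finset.mem_singleton, not_or] at hk
        have hk1 : ¬ ((k : ℕ) = (r : ℕ)) := fun h => hk.1 (Fin.ext (by simp [h]))
        have hk2 : ¬ ((k : ℕ) = (r : ℕ) + 1) := fun h => hk.2 (Fin.ext (by simp [h]))
        have hv : ((r.succ : Fin (n+1)) : ℕ) = (r : ℕ) + 1 := rfl
        have c1 : ¬ (((r.succ : Fin (n+1)) : ℕ) = (k : ℕ)) := by omega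
        have c2 : ¬ ((k : ℕ) + 1 = ((r.succ : Fin (n+1)) : ℕ)) := by omega
        simp only [hT, Matrix.of_apply, if_neg c1, if_neg c2, zero_mul]
      rw [← Finset.sum_subset hsub hz,
        Finset.sum_pair (ne_of_lt (Fin.castSucc_lt_succ : r.castSucc < r.succ))]
      have hv : ((r.succ : Fin (n+1)) : ℕ) = (r : ℕ) + 1 := rfl
      have hvc : ((r.castSucc : Fin (n+1)) : ℕ) = (r : ℕ) := rfl
      have e1 : T r.succ r.castSucc = -(κ 0) * (if Even ((r : ℕ) + 1) then b 0 else a 0) := by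
        have c1 : ((r.castSucc : Fin (n+1)) : ℕ) + 1 = ((r.succ : Fin (n+1)) : ℕ) := by
          rw [hv, hvc]
        have c2 : ¬ (((r.succ : Fin (n+1)) : ℕ) = ((r.castSucc : Fin (n+1)) : ℕ)) := by
          rw [hv, hvc]; omega
        simp only [hT, Matrix.of_apply]
        rw [if_neg c2, if_pos c1, hv]
      have e2 : T r.succ r.succ = (if Even ((r : ℕ) + 1) then a 0 else b 0) := by
        simp only [hT, Matrix.of_apply, eq_self_iff_true, if_true]
        rw [if_neg (by rw [hv]; omega : ¬ (((r.succ : Fin (n+1)) : ℕ) = 0)), hv]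
      rw [e1, e2]
      have hWr : W r.succ j = κ j ^ (r : ℕ) *
          (if Even (r : ℕ) then b 0 * κ j * a j - a 0 * κ 0 * b j
           else a 0 * κ j * b j - b 0 * κ 0 * a j) := by
        simp only [hW, Matrix.of_apply]
        rw [if_neg (by rw [hv]; omega : ¬ (((r.succ : Fin (n+1)) : ℕ) = 0)), hv,
          Nat.add_sub_cancel]
      rw [hWr]
      simp only [Vm, Matrix.of_apply, hv, hvc]
      rcases Nat.even_or_odd (r : ℕ) with h | h
      · have h1 : ¬ Even ((r : ℕ) + 1) := by simp [Nat.even_add_one, h]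
        simp only [if_pos h, if_neg h1]
        rw [pow_succ]
        ring
      · have h0 : ¬ Even (r : ℕ) := Nat.not_even_iff_odd.mpr h
        have h1 : Even ((r : ℕ) + 1) := by simp [Nat.even_add_one, h0]
        simp only [if_pos h1, if_neg h0]
        rw [pow_succ]
        ring
  -- expand det W along column 0
  have hWcol : ∀ i : Fin (n+1), i ≠ 0 → W i 0 = 0 := by
    intro i hi
    have hi' : ¬ ((i : ℕ) = 0) := fun h => hi (Fin.ext h)
    simp only [hW, Matrix.of_apply, if_neg hi']
    rcases Nat.even_or_odd ((i : ℕ) - 1) with h | h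
    · rw [if_pos h]; ring
    · rw [if_neg (Nat.not_even_iff_odd.mpr h)]; ring
  have hdetW : W.det = b 0 * (Vm ahat bhat κ').det := by
    rw [Matrix.det_succ_column_zero]
    rw [Finset.sum_eq_single 0 (fun i _ hi => by rw [hWcol i hi]; ring) (by simp)]
    have hW00 : W 0 0 = b 0 := by simp [hW]
    have hsub : W.submatrix ((0 : Fin (n+1)).succAbove) Fin.succ = Vm ahat bhat κ' := by
      ext i j
      have hv : ((i.succ : Fin (n+1)) : ℕ) = (i : ℕ) + 1 := rfl
      simp only [Matrix.submatrix_apply, Fin.succAbove_zero, hW, Matrix.of_apply, hv,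
        if_neg (by omega : ¬ ((i:ℕ)+1 = 0)), Nat.add_sub_cancel, Vm, hahat, hbhat, hκ']
    rw [hW00, hsub]
    simp
  have := congrArg Matrix.det hprod
  rw [Matrix.det_mul, hdetT, hdetW] at this
  rw [← this]

/-- Diagonal rescaling of `Vm`. -/
lemma vm_scale {n : ℕ} (a b a' b' κ w : Fin n → ℝ) (u v : ℝ)
    (ha : ∀ j, a' j = a j / (u * w j)) (hb : ∀ j, b' j = b j / (v * w j)) :
    (Vm a' b' κ).det = (∏ i : Fin n, if Even (i : ℕ) then u⁻¹ else v⁻¹)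
      * (∏ j, (w j)⁻¹) * (Vm a b κ).det := by
  have hfac : Vm a' b' κ =
      Matrix.diagonal (fun i : Fin n => if Even (i : ℕ) then u⁻¹ else v⁻¹)
        * Vm a b κ * Matrix.diagonal (fun j => (w j)⁻¹) := by
    ext i j
    rw [Matrix.mul_diagonal, Matrix.diagonal_mul]
    simp only [Vm, Matrix.of_apply, ha, hb]
    by_cases h : Even (i : ℕ)
    · simp only [h, ite_true]
      rw [div_eq_mul_inv, mul_inv]
      ring
    · simp only [h, ite_false]
      rw [div_eq_mul_inv, mul_inv]
      ring
  rw [hfac, Matrix.det_mul, Matrix.det_mul, Matrix.det_diagonal, Matrix.det_diagonal]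
  ring

lemma dl_succ {n : ℕ} (κ : Fin (n+1) → ℝ) :
    Dl κ = κ 0 * (∏ j : Fin n, (κ 0 + κ j.succ) ^ 2) * Dl (fun j => κ j.succ) := by
  unfold Dl
  rw [Fin.prod_univ_succ (f := κ),
    Fin.prod_univ_succ (f := fun i => ∏ j ∈ Finset.Ioi i, (κ i + κ j) ^ 2),
    Fin.prod_Ioi_zero]
  have h2 : ∀ r : Fin n, ∏ j ∈ Finset.Ioi (r.succ), (κ r.succ + κ j) ^ 2
      = ∏ j ∈ Finset.Ioi r, (κ r.succ + κ j.succ) ^ 2 := fun r =>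
    Fin.prod_Ioi_succ _ r
  rw [Finset.prod_congr rfl fun r _ => h2 r]
  ring

lemma key_step {n : ℕ}
    (IH : ∀ (κ a b : Fin n → ℝ), (∀ i j, κ i + κ j ≠ 0) →
      (Gm a b κ).det * Dl κ = (Vm a b κ).det * (Vm b a κ).det)
    (κ a b : Fin (n+1) → ℝ) (hsum : ∀ i j, κ i + κ j ≠ 0)
    (ha0 : a 0 ≠ 0) (hb0 : b 0 ≠ 0) :
    (Gm a b κ).det * Dl κ = (Vm a b κ).det * (Vm b a κ).det := by
  classical
  set κ' : Fin n → ℝ := fun j => κ j.succ with hκ'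
  set ahat : Fin n → ℝ := fun j => b 0 * κ j.succ * a j.succ - a 0 * κ 0 * b j.succ with hahat
  set bhat : Fin n → ℝ := fun j => a 0 * κ j.succ * b j.succ - b 0 * κ 0 * a j.succ with hbhat
  set w : Fin n → ℝ := fun j => κ 0 + κ j.succ with hw
  set a' : Fin n → ℝ := fun j => ahat j / (b 0 * w j) with ha'
  set b' : Fin n → ℝ := fun j => bhat j / (a 0 * w j) with hb'
  have hsum' : ∀ i j, κ' i + κ' j ≠ 0 := fun i j => hsum _ _
  have hw0 : ∀ j, w j ≠ 0 := fun j => hsum 0 j.succ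
  have h00 : Gm a b κ 0 0 ≠ 0 := by
    have h2 : a 0 * b 0 + a 0 * b 0 ≠ 0 := by
      intro h
      exact (mul_ne_zero ha0 hb0) (by linarith)
    exact div_ne_zero h2 (hsum 0 0)
  have hschur : (Gm a b κ).det = Gm a b κ 0 0 * (Gm a' b' κ').det := by
    rw [schur_det (Gm a b κ) h00]
    congr 2
    ext i j
    simp only [Matrix.of_apply, Gm, ha', hb', hahat, hbhat, hκ', hw]
    have n1 : κ i.succ + κ j.succ ≠ 0 := hsum _ _
    have n2 : κ i.succ + κ 0 ≠ 0 := hsum _ _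
    have n3 : κ 0 + κ j.succ ≠ 0 := hsum _ _
    have n4 : κ 0 + κ 0 ≠ 0 := hsum _ _
    have n5 : κ 0 + κ i.succ ≠ 0 := hsum _ _
    field_simp
    ring
  have hIH := IH κ' a' b' hsum'
  set P : ℝ := ∏ r : Fin n, (if Even (r : ℕ) then b 0 else a 0) with hP
  set Q : ℝ := ∏ r : Fin n, (if Even (r : ℕ) then a 0 else b 0) with hQ
  set e : ℝ := ∏ j : Fin n, w j with he
  have hPne : P ≠ 0 := Finset.prod_ne_zero_iff.mpr fun r _ => by
    rcases Nat.even_or_odd (r : ℕ) with h | h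
    · rw [if_pos h]; exact hb0
    · rw [if_neg (Nat.not_even_iff_odd.mpr h)]; exact ha0
  have hQne : Q ≠ 0 := Finset.prod_ne_zero_iff.mpr fun r _ => by
    rcases Nat.even_or_odd (r : ℕ) with h | h
    · rw [if_pos h]; exact ha0
    · rw [if_neg (Nat.not_even_iff_odd.mpr h)]; exact hb0
  have hene : e ≠ 0 := Finset.prod_ne_zero_iff.mpr fun j _ => hw0 j
  have hDl' : Dl κ' ≠ 0 := dl_ne_zero κ' hsum'
  have hscaleA : (Vm a' b' κ').det = P⁻¹ * e⁻¹ * (Vm ahat bhat κ').det := by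
    rw [vm_scale ahat bhat a' b' κ' w (b 0) (a 0) (fun j => rfl) (fun j => rfl)]
    congr 2
    · rw [hP, ← Finset.prod_inv_distrib]
      exact Finset.prod_congr rfl fun r _ => (apply_ite Inv.inv _ _ _).symm
    · rw [he, ← Finset.prod_inv_distrib]
  have hscaleB : (Vm b' a' κ').det = Q⁻¹ * e⁻¹ * (Vm bhat ahat κ').det := by
    rw [vm_scale bhat ahat b' a' κ' w (a 0) (b 0) (fun j => rfl) (fun j => rfl)]
    congr 2
    · rw [hQ, ← Finset.prod_inv_distrib]
      exact Finset.prod_congr rfl fun r _ => (apply_ite Inv.inv _ _ _).symm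
    · rw [he, ← Finset.prod_inv_distrib]
  have hc1 : b 0 * (Vm ahat bhat κ').det = P * (Vm b a κ).det := by
    rw [hP]
    exact claim1 κ a b ahat bhat κ' (fun j => by simp only [hahat])
      (fun j => by simp only [hbhat]) (fun j => by simp only [hκ'])
  have hc2 : a 0 * (Vm bhat ahat κ').det = Q * (Vm a b κ).det := by
    rw [hQ]
    exact claim1 κ b a bhat ahat κ' (fun j => by simp only [hbhat])
      (fun j => by simp only [hahat]) (fun j => by simp only [hκ'])
  have hXH : (Vm ahat bhat κ').det = P * (Vm b a κ).det / b 0 := by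
    rw [eq_div_iff hb0, mul_comm]; exact hc1
  have hYH : (Vm bhat ahat κ').det = Q * (Vm a b κ).det / a 0 := by
    rw [eq_div_iff ha0, mul_comm]; exact hc2
  have hGm' : (Gm a' b' κ').det = (Vm a' b' κ').det * (Vm b' a' κ').det / Dl κ' := by
    rw [eq_div_iff hDl']; exact hIH
  have hE2 : (∏ j : Fin n, (κ 0 + κ j.succ) ^ 2) = e ^ 2 := by
    rw [he, ← Finset.prod_pow]
  have hdl : Dl κ = κ 0 * e ^ 2 * Dl κ' := by
    rw [dl_succ κ, hE2, ← hκ']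
  have hGm00 : Gm a b κ 0 0 = (a 0 * b 0 + a 0 * b 0) / (κ 0 + κ 0) := rfl
  rw [hschur, hdl, hGm', hscaleA, hscaleB, hXH, hYH, hGm00]
  have h4 : κ 0 + κ 0 ≠ 0 := hsum 0 0
  have h5 : κ 0 ≠ 0 := fun h => h4 (by rw [h, add_zero])
  field_simp

theorem key : ∀ (n : ℕ) (κ a b : Fin n → ℝ), (∀ i j, κ i + κ j ≠ 0) →
    (Gm a b κ).det * Dl κ = (Vm a b κ).det * (Vm b a κ).det := by
  intro n
  induction n with
  | zero =>
    intro κ a b _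
    simp [Gm, Vm, Dl, Matrix.det_fin_zero]
  | succ n IH =>
    intro κ a b hsum
    classical
    set F : ℝ × ℝ → ℝ := fun p =>
      (Gm (Function.update a 0 p.1) (Function.update b 0 p.2) κ).det * Dl κ with hF
    set G : ℝ × ℝ → ℝ := fun p =>
      (Vm (Function.update a 0 p.1) (Function.update b 0 p.2) κ).det *
      (Vm (Function.update b 0 p.2) (Function.update a 0 p.1) κ).det with hG
    have hA : ∀ i : Fin (n+1), Continuous fun p : ℝ × ℝ => Function.update a 0 p.1 i := by
      intro i
      rcases eq_or_ne i 0 with rfl | hi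
      · simp only [Function.update_self]; exact continuous_fst
      · simp only [Function.update_of_ne hi]; exact continuous_const
    have hB : ∀ i : Fin (n+1), Continuous fun p : ℝ × ℝ => Function.update b 0 p.2 i := by
      intro i
      rcases eq_or_ne i 0 with rfl | hi
      · simp only [Function.update_self]; exact continuous_snd
      · simp only [Function.update_of_ne hi]; exact continuous_const
    have hVmc : ∀ (f g : ℝ × ℝ → Fin (n+1) → ℝ),
        (∀ i, Continuous fun p => f p i) → (∀ i, Continuous fun p => g p i) →
        Continuous fun p => (Vm (f p) (g p) κ).det := by
      intro f g hf hg
      apply Continuous.matrix_det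
      apply continuous_matrix
      intro i j
      simp only [Vm, Matrix.of_apply]
      rcases Nat.even_or_odd (i : ℕ) with h | h
      · simp only [if_pos h]; exact continuous_const.mul (hf j)
      · simp only [if_neg (Nat.not_even_iff_odd.mpr h)]; exact continuous_const.mul (hg j)
    have hFc : Continuous F := by
      rw [hF]
      apply Continuous.mul _ continuous_const
      apply Continuous.matrix_det
      apply continuous_matrix
      intro i j
      simp only [Gm, Matrix.of_apply]
      exact (((hA i).mul (hB j)).add ((hA j).mul (hB i))).div_const _
    have hGc : Continuous G := by
      rw [hG]
      exact (hVmc _ _ hA hB).mul (hVmc _ _ hB hA)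
    have heq : Set.EqOn F G (({(0:ℝ)}ᶜ : Set ℝ) ×ˢ ({(0:ℝ)}ᶜ : Set ℝ)) := by
      intro p hp
      have hp1 : p.1 ≠ 0 := hp.1
      have hp2 : p.2 ≠ 0 := hp.2
      simp only [hF, hG]
      exact key_step IH κ _ _ hsum
        (by rw [Function.update_self]; exact hp1)
        (by rw [Function.update_self]; exact hp2)
    have hFG : F = G :=
      Continuous.ext_on ((dense_compl_singleton (0:ℝ)).prod
        (dense_compl_singleton (0:ℝ))) hFc hGc heq
    have hfin := congrFun hFG (a 0, b 0)
    simp only [hF, hG, Function.update_eq_self] at hfin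
    exact hfin

lemma iter_sinh_cosh (k : ℝ) (m : ℕ) :
    (∀ x, iteratedDeriv m (fun t => Real.sinh (k * t)) x
      = k ^ m * (if Even m then Real.sinh (k * x) else Real.cosh (k * x)))
  ∧ (∀ x, iteratedDeriv m (fun t => Real.cosh (k * t)) x
      = k ^ m * (if Even m then Real.cosh (k * x) else Real.sinh (k * x))) := by
  induction m with
  | zero => constructor <;> intro x <;> simp
  | succ m ih =>
    obtain ⟨ih1, ih2⟩ := ih
    have hsf : iteratedDeriv m (fun t => Real.sinh (k * t))
        = fun x => k ^ m * (if Even m then Real.sinh (k * x) else Real.cosh (k * x)) :=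
      funext ih1
    have hcf : iteratedDeriv m (fun t => Real.cosh (k * t))
        = fun x => k ^ m * (if Even m then Real.cosh (k * x) else Real.sinh (k * x)) :=
      funext ih2
    have hkx : ∀ x : ℝ, HasDerivAt (fun y : ℝ => k * y) k x := fun x => by
      simpa using (hasDerivAt_id x).const_mul k
    constructor
    · intro x
      rw [iteratedDeriv_succ, hsf]
      rcases Nat.even_or_odd m with h | h
      · have h1 : ¬ Even (m+1) := by simp [Nat.even_add_one, h]
        simp only [if_pos h, if_neg h1]
        have hd : HasDerivAt (fun y => k ^ m * Real.sinh (k * y))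
            (k ^ m * (Real.cosh (k * x) * k)) x := ((hkx x).sinh).const_mul _
        rw [hd.deriv, pow_succ]
        ring
      · have h0 : ¬ Even m := Nat.not_even_iff_odd.mpr h
        have h1 : Even (m+1) := by simp [Nat.even_add_one, h0]
        simp only [if_neg h0, if_pos h1]
        have hd : HasDerivAt (fun y => k ^ m * Real.cosh (k * y))
            (k ^ m * (Real.sinh (k * x) * k)) x := ((hkx x).cosh).const_mul _
        rw [hd.deriv, pow_succ]
        ring
    · intro x
      rw [iteratedDeriv_succ, hcf]
      rcases Nat.even_or_odd m with h | h
      · have h1 : ¬ Even (m+1) := by simp [Nat.even_add_one, h]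
        simp only [if_pos h, if_neg h1]
        have hd : HasDerivAt (fun y => k ^ m * Real.cosh (k * y))
            (k ^ m * (Real.sinh (k * x) * k)) x := ((hkx x).cosh).const_mul _
        rw [hd.deriv, pow_succ]
        ring
      · have h0 : ¬ Even m := Nat.not_even_iff_odd.mpr h
        have h1 : Even (m+1) := by simp [Nat.even_add_one, h0]
        simp only [if_neg h0, if_pos h1]
        have hd : HasDerivAt (fun y => k ^ m * Real.sinh (k * y))
            (k ^ m * (Real.cosh (k * x) * k)) x := ((hkx x).sinh).const_mul _
        rw [hd.deriv, pow_succ]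
        ring

end SGW

theorem sinh_gramian_wronskian {n : ℕ} (κ : Fin n → ℝ) (hκ : Function.Injective κ)
    (hsum : ∀ i j, κ i + κ j ≠ 0) (x : ℝ) :
    (Matrix.of fun i j : Fin n => Real.sinh ((κ i + κ j) * x) / (κ i + κ j)).det
      = (Matrix.of fun i j : Fin n =>
          iteratedDeriv (i : ℕ) (fun t => Real.cosh (κ j * t)) x).det
        * (Matrix.of fun i j : Fin n =>
          iteratedDeriv (i : ℕ) (fun t => Real.sinh (κ j * t)) x).det
        / ((∏ i, κ i) * ∏ i, ∏ j ∈ Finset.Ioi i, (κ i + κ j) ^ 2) := by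
  classical
  set a : Fin n → ℝ := fun i => Real.sinh (κ i * x) with ha
  set b : Fin n → ℝ := fun i => Real.cosh (κ i * x) with hb
  have h1 : (Matrix.of fun i j : Fin n => Real.sinh ((κ i + κ j) * x) / (κ i + κ j))
      = SGW.Gm a b κ := by
    ext i j
    simp only [SGW.Gm, Matrix.of_apply, ha, hb]
    congr 1
    rw [add_mul, Real.sinh_add]
    ring
  have h2 : (Matrix.of fun i j : Fin n =>
      iteratedDeriv (i : ℕ) (fun t => Real.cosh (κ j * t)) x) = SGW.Vm b a κ := by
    ext i j
    simp only [SGW.Vm, Matrix.of_apply, ha, hb]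
    rw [(SGW.iter_sinh_cosh (κ j) (i : ℕ)).2 x]
  have h3 : (Matrix.of fun i j : Fin n =>
      iteratedDeriv (i : ℕ) (fun t => Real.sinh (κ j * t)) x) = SGW.Vm a b κ := by
    ext i j
    simp only [SGW.Vm, Matrix.of_apply, ha, hb]
    rw [(SGW.iter_sinh_cosh (κ j) (i : ℕ)).1 x]
  rw [h1, h2, h3]
  have hkey := SGW.key n κ a b hsum
  have hDl : SGW.Dl κ = (∏ i, κ i) * ∏ i, ∏ j ∈ Finset.Ioi i, (κ i + κ j) ^ 2 := rfl
  rw [eq_div_iff (by rw [← hDl]; exact SGW.dl_ne_zero κ hsum), ← hDl, hkey]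
  ring
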